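/- If C is a semisimple tensor category, then there is a canonical group isomorphism between the abelian group of functorial tensor automorphisms of C and the group of k-valued characters of the grading group Gr_C. -/

import Mathlib

set_option linter.unusedSectionVars false
set_option maxHeartbeats 1000000

open CategoryTheory MonoidalCategory CategoryTheory.Limits

namespace TAeqAux



variable {C : Type*} [Category C] {k : Type*} [Field k]
variable [Preadditive C] [Linear k C] [Limits.HasFiniteBiproducts C]
variable {ι : Type*} {s : ι → C}

/-- scalars commute across maps between (possibly different) simples -/
lemma key1 (hzero : ∀ i j : ι, i ≠ j → ∀ f : s i ⟶ s j, f = 0)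
    {a b : ι} (w : s a ⟶ s b) (c : ι → k) : c b • w = c a • w := by
  by_cases h : a = b
  · subst h; rfl
  · rw [hzero a b h w]; simp

lemma key1' (hzero : ∀ i j : ι, i ≠ j → ∀ f : s i ⟶ s j, f = 0)
    {a b : ι} {Z : C} (w : s a ⟶ s b) (y : s b ⟶ Z) (c : ι → k) :
    c b • (w ≫ y) = c a • (w ≫ y) := by
  rw [← Linear.smul_comp, ← Linear.smul_comp, key1 hzero w c]

noncomputable def Tform {X : C} {n : ℕ} {f : Fin n → ι}
    (e : X ≅ ⨁ fun i : Fin n => s (f i)) (c : ι → k) : X ⟶ X :=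
  ∑ j, c (f j) • (e.hom ≫ biproduct.π (fun i : Fin n => s (f i)) j ≫
    biproduct.ι (fun i : Fin n => s (f i)) j ≫ e.inv)

lemma sum_dec {X : C} {n : ℕ} {f : Fin n → ι} (e : X ≅ ⨁ fun i : Fin n => s (f i)) :
    ∑ j, e.hom ≫ biproduct.π (fun i : Fin n => s (f i)) j ≫
      biproduct.ι (fun i : Fin n => s (f i)) j ≫ e.inv = 𝟙 X := by
  rw [← Preadditive.comp_sum]
  simp only [← Category.assoc]
  rw [← Preadditive.sum_comp, biproduct.total]
  simp

lemma comp_Tform (hzero : ∀ i j : ι, i ≠ j → ∀ f : s i ⟶ s j, f = 0)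
    {X : C} {n : ℕ} {f : Fin n → ι} (e : X ≅ ⨁ fun i : Fin n => s (f i)) (c : ι → k)
    {a : ι} (v : s a ⟶ X) : v ≫ Tform e c = c a • v := by
  calc v ≫ Tform e c
      = ∑ j, c (f j) • (v ≫ e.hom ≫ biproduct.π (fun i : Fin n => s (f i)) j ≫
          biproduct.ι (fun i : Fin n => s (f i)) j ≫ e.inv) := by
        rw [Tform, Preadditive.comp_sum]; simp only [Linear.comp_smul, Category.assoc]
    _ = ∑ j, c a • (v ≫ e.hom ≫ biproduct.π (fun i : Fin n => s (f i)) j ≫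
          biproduct.ι (fun i : Fin n => s (f i)) j ≫ e.inv) := by
        refine Finset.sum_congr rfl fun j _ => ?_
        have := key1' hzero (v ≫ e.hom ≫ biproduct.π (fun i : Fin n => s (f i)) j)
          (biproduct.ι (fun i : Fin n => s (f i)) j ≫ e.inv) c
        simpa only [Category.assoc] using this
    _ = c a • v := by
        rw [← Finset.smul_sum, ← Preadditive.comp_sum, sum_dec]
        simp

variable (hss : ∀ X : C, ∃ (n : ℕ) (f : Fin n → ι),
      Nonempty (X ≅ ⨁ fun i : Fin n => s (f i)))

noncomputable def dn (X : C) : ℕ := (hss X).choose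

noncomputable def df (X : C) : Fin (dn hss X) → ι := (hss X).choose_spec.choose

noncomputable def de (X : C) : X ≅ ⨁ fun i : Fin (dn hss X) => s (df hss X i) :=
  (hss X).choose_spec.choose_spec.some

noncomputable def T (c : ι → k) (X : C) : X ⟶ X := Tform (de hss X) c

lemma comp_T (hzero : ∀ i j : ι, i ≠ j → ∀ f : s i ⟶ s j, f = 0)
    (c : ι → k) {X : C} {a : ι} (v : s a ⟶ X) : v ≫ T hss c X = c a • v :=
  comp_Tform hzero _ c v

include hss in
lemma hom_ext {X Z : C} {w w' : X ⟶ Z}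
    (h : ∀ a (v : s a ⟶ X), v ≫ w = v ≫ w') : w = w' := by
  obtain ⟨n, f, ⟨e⟩⟩ := hss X
  have h1 : e.inv ≫ w = e.inv ≫ w' := by
    apply biproduct.hom_ext'
    intro j
    simpa only [Category.assoc] using h (f j) (biproduct.ι (fun i : Fin n => s (f i)) j ≫ e.inv)
  calc w = e.hom ≫ e.inv ≫ w := by simp
    _ = e.hom ≫ e.inv ≫ w' := by rw [h1]
    _ = w' := by simp

lemma T_simple (hzero : ∀ i j : ι, i ≠ j → ∀ f : s i ⟶ s j, f = 0)
    (c : ι → k) (j : ι) : T hss c (s j) = c j • 𝟙 (s j) := by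
  have := comp_T hss hzero c (𝟙 (s j))
  simpa using this

lemma T_one (hzero : ∀ i j : ι, i ≠ j → ∀ f : s i ⟶ s j, f = 0) (X : C) :
    T hss (fun _ => (1 : k)) X = 𝟙 X := by
  apply TAeqAux.hom_ext hss
  intro a v
  rw [comp_T hss hzero]
  simp

lemma T_comp (hzero : ∀ i j : ι, i ≠ j → ∀ f : s i ⟶ s j, f = 0)
    (c c' : ι → k) (X : C) : T hss c X ≫ T hss c' X = T hss (fun j => c j * c' j) X := by
  apply TAeqAux.hom_ext hss
  intro a v
  rw [← Category.assoc, comp_T hss hzero, comp_T hss hzero, comp_T hss hzero,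
    smul_smul, mul_comm]

lemma T_nat (hzero : ∀ i j : ι, i ≠ j → ∀ f : s i ⟶ s j, f = 0)
    (c : ι → k) {X Y : C} (u : X ⟶ Y) : u ≫ T hss c Y = T hss c X ≫ u := by
  apply TAeqAux.hom_ext hss
  intro a v
  rw [← Category.assoc, comp_T hss hzero, ← Category.assoc, comp_T hss hzero,
    Linear.smul_comp]

section Monoidal
variable [MonoidalCategory C] [MonoidalPreadditive C] [MonoidalLinear k C]

lemma smul_tensor_smul {X Y Z W : C} (a b : k) (f : X ⟶ Y) (g : Z ⟶ W) :
    (a • f) ⊗ₘ (b • g) = (a * b) • (f ⊗ₘ g) := by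
  simp [MonoidalCategory.tensorHom_def, mul_smul]; rw [smul_comm]

lemma tensor_term {c : ι → k}
    (hc2 : ∀ a b d : ι, ∀ w : s a ⟶ s b ⊗ s d, (c b * c d) • w = c a • w)
    {A B : C} {a b d : ι} (p : A ⟶ s b) (q : s b ⟶ A) (p' : B ⟶ s d) (q' : s d ⟶ B)
    (v : s a ⟶ A ⊗ B) :
    (c b * c d) • (v ≫ ((p ≫ q) ⊗ₘ (p' ≫ q'))) = c a • (v ≫ ((p ≫ q) ⊗ₘ (p' ≫ q'))) := by
  rw [← tensorHom_comp_tensorHom]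
  calc (c b * c d) • (v ≫ (p ⊗ₘ p') ≫ (q ⊗ₘ q'))
      = ((c b * c d) • (v ≫ (p ⊗ₘ p'))) ≫ (q ⊗ₘ q') := by
        rw [Linear.smul_comp, Category.assoc]
    _ = (c a • (v ≫ (p ⊗ₘ p'))) ≫ (q ⊗ₘ q') := by rw [hc2 a b d (v ≫ (p ⊗ₘ p'))]
    _ = c a • (v ≫ (p ⊗ₘ p') ≫ (q ⊗ₘ q')) := by rw [Linear.smul_comp, Category.assoc]

lemma T_tensor (hzero : ∀ i j : ι, i ≠ j → ∀ f : s i ⟶ s j, f = 0) (c : ι → k)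
    (hc2 : ∀ a b d : ι, ∀ w : s a ⟶ s b ⊗ s d, (c b * c d) • w = c a • w)
    (A B : C) : T hss c (A ⊗ B) = T hss c A ⊗ₘ T hss c B := by
  apply TAeqAux.hom_ext hss
  intro a v
  rw [comp_T hss hzero]
  symm
  set pA : ∀ j : Fin (dn hss A), A ⟶ s (df hss A j) :=
    fun j => (de hss A).hom ≫ biproduct.π (fun i => s (df hss A i)) j with hpA
  set qA : ∀ j : Fin (dn hss A), s (df hss A j) ⟶ A :=
    fun j => biproduct.ι (fun i => s (df hss A i)) j ≫ (de hss A).inv with hqA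
  set pB : ∀ l : Fin (dn hss B), B ⟶ s (df hss B l) :=
    fun l => (de hss B).hom ≫ biproduct.π (fun i => s (df hss B i)) l with hpB
  set qB : ∀ l : Fin (dn hss B), s (df hss B l) ⟶ B :=
    fun l => biproduct.ι (fun i => s (df hss B i)) l ≫ (de hss B).inv with hqB
  have hTA : T hss c A = ∑ j, c (df hss A j) • (pA j ≫ qA j) := by
    simp only [T, Tform, hpA, hqA, Category.assoc]
  have hTB : T hss c B = ∑ l, c (df hss B l) • (pB l ≫ qB l) := by
    simp only [T, Tform, hpB, hqB, Category.assoc]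
  have hA1 : ∑ j, pA j ≫ qA j = 𝟙 A := by
    simpa only [hpA, hqA, Category.assoc] using sum_dec (de hss A)
  have hB1 : ∑ l, pB l ≫ qB l = 𝟙 B := by
    simpa only [hpB, hqB, Category.assoc] using sum_dec (de hss B)
  calc v ≫ (T hss c A ⊗ₘ T hss c B)
      = ∑ j, ∑ l, (c (df hss A j) * c (df hss B l)) •
          (v ≫ ((pA j ≫ qA j) ⊗ₘ (pB l ≫ qB l))) := by
        rw [hTA, hTB]
        simp only [sum_tensor, tensor_sum, Preadditive.comp_sum, smul_tensor_smul,
          Linear.comp_smul]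
        rw [Finset.sum_comm]
    _ = ∑ j, ∑ l, c a • (v ≫ ((pA j ≫ qA j) ⊗ₘ (pB l ≫ qB l))) := by
        refine Finset.sum_congr rfl fun j _ => Finset.sum_congr rfl fun l _ => ?_
        exact tensor_term hc2 (pA j) (qA j) (pB l) (qB l) v
    _ = c a • (v ≫ ((∑ j, pA j ≫ qA j) ⊗ₘ (∑ l, pB l ≫ qB l))) := by
        simp only [sum_tensor, tensor_sum, Preadditive.comp_sum, Finset.smul_sum]
        rw [Finset.sum_comm]
    _ = c a • v := by rw [hA1, hB1, id_tensorHom_id, Category.comp_id]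

lemma T_unit (hzero : ∀ i j : ι, i ≠ j → ∀ f : s i ⟶ s j, f = 0) (c : ι → k)
    {i₀ : ι} (hunit : s i₀ = 𝟙_ C) (hc0 : c i₀ = 1) :
    T hss c (𝟙_ C) = 𝟙 (𝟙_ C) := by
  apply TAeqAux.hom_ext hss
  intro a v
  rw [comp_T hss hzero, Category.comp_id]
  by_cases h : a = i₀
  · subst h; rw [hc0, one_smul]
  · have h0 : v ≫ eqToHom hunit.symm = 0 := hzero a i₀ h _
    have : v = 0 := by
      have := congrArg (fun t => t ≫ eqToHom hunit) h0
      simpa using this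
    rw [this]; simp

end Monoidal

end TAeqAux

namespace TAeqAux


lemma char_exists {A : Type*} [CommGroup A] {x : A} (hx : x ≠ 1) :
    ∃ ψ : A →* Multiplicative (AddCircle (1 : ℚ)), ψ x ≠ 1 := by
  obtain ⟨c, hc⟩ := CharacterModule.exists_character_apply_ne_zero_of_ne_zero
    (A := Additive A) (a := Additive.ofMul x) (by simpa using hx)
  refine ⟨MonoidHom.mk' (fun a => Multiplicative.ofAdd (c (Additive.ofMul a))) ?_, ?_⟩
  · intro a b
    simp [map_add]
  · simpa using hc

variable {ι : Type*} (R : ι → ι → ι → Prop)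
variable {Gr : Type*} [Group Gr] (gr₀ : ι → Gr)
variable (huniv : ∀ (G : Type) [Group G] (g : ι → G), (∀ i j l : ι, R i j l → g j * g l = g i) →
      ∃! h : Gr →* G, ∀ j : ι, h (gr₀ j) = g j)
variable {M : Type*} [CommGroup M]

include huniv in
lemma hom_unique (h₁ h₂ : Gr →* M) (hagree : ∀ j, h₁ (gr₀ j) = h₂ (gr₀ j)) : h₁ = h₂ := by
  by_contra hne
  obtain ⟨x, hx⟩ : ∃ x, h₁ x ≠ h₂ x := by
    by_contra h; push_neg at h; exact hne (MonoidHom.ext h)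
  set d : Gr →* M := h₁ * h₂⁻¹ with hd
  have hdx : d x ≠ 1 := by
    simp only [hd, MonoidHom.mul_apply, MonoidHom.inv_apply, Ne, mul_inv_eq_one]
    exact hx
  obtain ⟨ψ, hψ⟩ := char_exists hdx
  obtain ⟨h0, hh0, hu⟩ := huniv (Multiplicative (AddCircle (1 : ℚ))) (fun _ => 1)
    (fun i j l _ => by simp)
  have e1 : ψ.comp d = h0 := hu _ (fun j => by
    simp only [MonoidHom.comp_apply, hd, MonoidHom.mul_apply, MonoidHom.inv_apply,
      hagree j, mul_inv_cancel, map_one])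
  have e2 : (1 : Gr →* Multiplicative (AddCircle (1 : ℚ))) = h0 := hu _ (fun j => rfl)
  apply hψ
  rw [show ψ (d x) = (ψ.comp d) x from rfl, e1, ← e2]
  rfl

include huniv in
lemma hom_exists (c : ι → M) (hc : ∀ i j l : ι, R i j l → c j * c l = c i) :
    ∃ h : Gr →* M, ∀ j, h (gr₀ j) = c j := by
  classical
  set A := Abelianization Gr with hA
  set aof : Gr →* A := Abelianization.of with haof
  set a : ι → A := fun j => aof (gr₀ j) with ha
  set P : FreeGroup ι →* A := FreeGroup.lift a with hP
  set Γ : FreeGroup ι →* M := FreeGroup.lift c with hΓ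
  have hPsurj : Function.Surjective P := by
    have hrange : P.range = Subgroup.closure (Set.range a) := FreeGroup.range_lift_eq_closure
    rw [← MonoidHom.range_eq_top, hrange]
    by_contra hne
    obtain ⟨x, hx⟩ : ∃ x : A, x ∉ Subgroup.closure (Set.range a) := by
      by_contra h; push_neg at h
      exact hne ((Subgroup.eq_top_iff' _).2 h)
    set H := Subgroup.closure (Set.range a) with hH
    set q : A →* A ⧸ H := QuotientGroup.mk' H with hq
    have hqx : q x ≠ 1 := by
      rwa [hq, QuotientGroup.mk'_apply, Ne, QuotientGroup.eq_one_iff]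
    obtain ⟨ψ, hψ⟩ := char_exists hqx
    obtain ⟨h0, hh0, hu⟩ := huniv (Multiplicative (AddCircle (1 : ℚ))) (fun _ => 1)
      (fun i j l _ => by simp)
    have e1 : (ψ.comp q).comp aof = h0 := hu _ (fun j => by
      have hmem : a j ∈ H := Subgroup.subset_closure ⟨j, rfl⟩
      simp only [MonoidHom.comp_apply]
      rw [show aof (gr₀ j) = a j from rfl, hq, QuotientGroup.mk'_apply,
        (QuotientGroup.eq_one_iff _).2 hmem, map_one])
    have e2 : (1 : Gr →* Multiplicative (AddCircle (1 : ℚ))) = h0 := hu _ (fun j => rfl)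
    obtain ⟨y, hy⟩ : ∃ y : Gr, aof y = x := QuotientGroup.mk_surjective x
    apply hψ
    have : ((ψ.comp q).comp aof) y = 1 := by rw [e1, ← e2]; rfl
    rw [MonoidHom.comp_apply, MonoidHom.comp_apply] at this
    rw [show aof y = x from hy] at this
    exact this
  have hker : P.ker ≤ Γ.ker := by
    intro w hw
    rw [MonoidHom.mem_ker] at hw ⊢
    by_contra hΓw
    obtain ⟨ψ, hψ⟩ := char_exists hΓw
    obtain ⟨h, hh, -⟩ := huniv (Multiplicative (AddCircle (1 : ℚ))) (fun j => ψ (c j))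
      (fun i j l hR => by rw [← map_mul, hc i j l hR])
    set h' : A →* Multiplicative (AddCircle (1 : ℚ)) := Abelianization.lift h with hh'
    have hcomp : h'.comp P = ψ.comp Γ := by
      apply FreeGroup.ext_hom
      intro j
      simp only [MonoidHom.comp_apply, hP, hΓ, FreeGroup.lift_apply_of, ha, hh']
      rw [show (Abelianization.lift h) (aof (gr₀ j)) = h (gr₀ j) from
        Abelianization.lift_apply_of h _, hh j]
    have := congrArg (fun F : FreeGroup ι →* Multiplicative (AddCircle (1 : ℚ)) => F w) hcomp
    simp only [MonoidHom.comp_apply, hw, map_one] at this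
    exact hψ this.symm
  obtain ⟨h', hh'⟩ : ∃ h' : A →* M, ∀ w, h' (P w) = Γ w := by
    refine ⟨(P.liftOfSurjective hPsurj) ⟨Γ, hker⟩, fun w => ?_⟩
    exact MonoidHom.liftOfRightInverse_comp_apply _ _ _ _ w
  refine ⟨h'.comp aof, fun j => ?_⟩
  have := hh' (FreeGroup.of j)
  rw [hP, FreeGroup.lift_apply_of, hΓ, FreeGroup.lift_apply_of] at this
  exact this


-- new material starts here
section Aut
variable {C : Type*} [Category C] {k : Type*} [Field k]
variable [Preadditive C] [Linear k C] [Limits.HasFiniteBiproducts C]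
variable {ι : Type*} {s : ι → C}
variable (hss : ∀ X : C, ∃ (n : ℕ) (f : Fin n → ι),
      Nonempty (X ≅ ⨁ fun i : Fin n => s (f i)))
variable [MonoidalCategory C] [MonoidalPreadditive C] [MonoidalLinear k C]

/-- the natural automorphism with scalar `c j` on the simple `s j`. -/
noncomputable def autOf (hzero : ∀ i j : ι, i ≠ j → ∀ f : s i ⟶ s j, f = 0)
    (c : ι → kˣ) : Aut (𝟭 C) where
  hom :=
    { app := fun X => T hss (fun j => (c j : k)) X
      naturality := fun X Y u => T_nat hss hzero _ u }
  inv :=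
    { app := fun X => T hss (fun j => (((c j)⁻¹ : kˣ) : k)) X
      naturality := fun X Y u => T_nat hss hzero _ u }
  hom_inv_id := by
    apply NatTrans.ext
    funext X
    simp only [NatTrans.comp_app, NatTrans.id_app, Functor.id_obj]
    rw [T_comp hss hzero]
    have h1 : (fun j => ((c j : k) * (((c j)⁻¹ : kˣ) : k))) = fun _ => (1 : k) := by
      funext j; rw [← Units.val_mul, mul_inv_cancel, Units.val_one]
    rw [h1, T_one hss hzero]
  inv_hom_id := by
    apply NatTrans.ext
    funext X
    simp only [NatTrans.comp_app, NatTrans.id_app, Functor.id_obj]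
    rw [T_comp hss hzero]
    have h1 : (fun j => ((((c j)⁻¹ : kˣ) : k) * (c j : k))) = fun _ => (1 : k) := by
      funext j; rw [← Units.val_mul, inv_mul_cancel, Units.val_one]
    rw [h1, T_one hss hzero]

lemma autOf_hom_app (hzero : ∀ i j : ι, i ≠ j → ∀ f : s i ⟶ s j, f = 0)
    (c : ι → kˣ) (X : C) :
    (autOf hss hzero c).hom.app X = T hss (fun j => (c j : k)) X := rfl

end Aut
end TAeqAux

open TAeqAux

open CategoryTheory MonoidalCategory

section

variable {C : Type*} [Category C]

/-- A functorial tensor automorphism of a monoidal category. -/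
def IsTensorAut [MonoidalCategory C] (φ : Aut (𝟭 C)) : Prop :=
  (∀ A B : C, φ.hom.app (A ⊗ B) = φ.hom.app A ⊗ₘ φ.hom.app B) ∧
    φ.hom.app (𝟙_ C) = 𝟙 (𝟙_ C)

/-- A `G`-grading of the semisimple tensor category with simple objects `s`. -/
def IsGrading [Preadditive C] [MonoidalCategory C] {ι : Type*} (s : ι → C)
    {G : Type*} [Group G] (g : ι → G) : Prop :=
  ∀ i j l : ι, (∃ f : s i ⟶ s j ⊗ s l, f ≠ 0) → g j * g l = g i

/-- For a semisimple tensor category `C` with grading group `Gr_C` (given here by its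
universal property), the group of functorial tensor automorphisms of `C` is canonically
isomorphic to the group of `k`-characters of `Gr_C`: the isomorphism sends an
automorphism with scalars `c j` on the simple objects to the character taking the
class of `j` to `c j`. -/
theorem tensorAut_equiv_characters
    (k : Type*) [Field k]
    [Preadditive C] [Linear k C] [Abelian C] [Limits.HasFiniteBiproducts C]
    [MonoidalCategory C] [MonoidalPreadditive C] [MonoidalLinear k C]
    {ι : Type*} (s : ι → C) (i₀ : ι) (hunit : s i₀ = 𝟙_ C)
    (hss : ∀ X : C, ∃ (n : ℕ) (f : Fin n → ι),
      Nonempty (X ≅ ⨁ fun i : Fin n => s (f i)))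
    (hend : ∀ j : ι, Module.finrank k (s j ⟶ s j) = 1)
    (hzero : ∀ i j : ι, i ≠ j → ∀ f : s i ⟶ s j, f = 0)
    -- `Gr` is the grading group of `C`: a universal group equipped with a grading
    (Gr : Type*) [Group Gr] (gr₀ : ι → Gr) (hgr : IsGrading s gr₀)
    (huniv : ∀ (G : Type) [Group G] (g : ι → G), IsGrading s g →
      ∃! h : Gr →* G, ∀ j : ι, h (gr₀ j) = g j) :
    ∃ (S : Subgroup (Aut (𝟭 C))) (_ : ∀ φ : Aut (𝟭 C), φ ∈ S ↔ IsTensorAut φ)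
      (e : S ≃* (Gr →* kˣ)),
      ∀ (φ : Aut (𝟭 C)) (hφ : φ ∈ S) (c : ι → k),
        (∀ j : ι, φ.hom.app (s j) = c j • 𝟙 (s j)) →
        ∀ j : ι, ((e ⟨φ, hφ⟩) (gr₀ j) : k) = c j := by
  classical
  -- identity on simples is nonzero
  have hid : ∀ j : ι, (𝟙 (s j) : s j ⟶ s j) ≠ 0 := by
    intro j h
    haveI : Subsingleton (s j ⟶ s j) :=
      ⟨fun f g => by rw [← Category.comp_id f, ← Category.comp_id g, h, comp_zero, comp_zero]⟩
    have := hend j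
    rw [Module.finrank_zero_of_subsingleton] at this
    exact zero_ne_one this
  -- scalars cancel against a nonzero morphism
  have hcancel : ∀ {X Y : C} (f : X ⟶ Y), f ≠ 0 → ∀ a b : k, a • f = b • f → a = b := by
    intro X Y f hf a b hab
    by_contra hne
    have h1 : (a - b) • f = 0 := by rw [sub_smul, hab, sub_self]
    have h2 : f = 0 := by
      calc f = (a - b)⁻¹ • ((a - b) • f) := (inv_smul_smul₀ (sub_ne_zero.2 hne) f).symm
        _ = 0 := by rw [h1, smul_zero]
    exact hf h2
  have hinj : ∀ (j : ι) (a b : k), a • 𝟙 (s j) = b • 𝟙 (s j) → a = b :=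
    fun j a b h => hcancel _ (hid j) a b h
  have hscalar : ∀ (j : ι) (f : s j ⟶ s j), ∃ r : k, r • 𝟙 (s j) = f := by
    intro j
    exact (finrank_eq_one_iff_of_nonzero' (𝟙 (s j)) (hid j)).mp (hend j)
  -- gr₀ i₀ = 1
  have hGr1 : gr₀ i₀ = 1 := by
    have I₀ : s i₀ ≅ s i₀ ⊗ s i₀ :=
      eqToIso hunit ≪≫ (λ_ (𝟙_ C)).symm ≪≫
        tensorIso (eqToIso hunit.symm) (eqToIso hunit.symm)
    have hne : I₀.hom ≠ 0 := by
      intro h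
      have := I₀.hom_inv_id
      rw [h, zero_comp] at this
      exact hid i₀ this.symm
    have := hgr i₀ i₀ i₀ ⟨I₀.hom, hne⟩
    exact mul_left_cancel (a := gr₀ i₀) (by rw [this, mul_one])
  -- determination of a natural transformation by its values on simples
  have hdet : ∀ φ ψ : Aut (𝟭 C),
      (∀ j, φ.hom.app (s j) = ψ.hom.app (s j)) → φ = ψ := by
    intro φ ψ h
    apply Aut.ext
    apply NatTrans.ext
    funext X
    apply TAeqAux.hom_ext hss
    intro a v
    have nφ := φ.hom.naturality v
    have nψ := ψ.hom.naturality v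
    simp only [Functor.id_obj, Functor.id_map] at nφ nψ
    rw [nφ, nψ, h a]
  -- the subgroup of tensor automorphisms
  let S : Subgroup (Aut (𝟭 C)) :=
    { carrier := {φ | IsTensorAut φ}
      one_mem' := by
        refine ⟨fun A B => ?_, rfl⟩
        show 𝟙 ((𝟭 C).obj (A ⊗ B)) = 𝟙 ((𝟭 C).obj A) ⊗ₘ 𝟙 ((𝟭 C).obj B)
        simp
      mul_mem' := by
        rintro φ ψ ⟨hφt, hφu⟩ ⟨hψt, hψu⟩
        constructor
        · intro A B
          show (ψ.hom ≫ φ.hom).app _ = (ψ.hom ≫ φ.hom).app A ⊗ₘ (ψ.hom ≫ φ.hom).app B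
          simp only [NatTrans.comp_app, Functor.id_obj]
          rw [hφt, hψt, tensorHom_comp_tensorHom]
        · show (ψ.hom ≫ φ.hom).app _ = 𝟙 _
          simp only [NatTrans.comp_app, Functor.id_obj]
          rw [hφu, hψu, Category.comp_id]
      inv_mem' := by
        rintro φ ⟨hφt, hφu⟩
        constructor
        · intro A B
          show φ.inv.app (A ⊗ B) = φ.inv.app A ⊗ₘ φ.inv.app B
          have h1 : (φ.inv.app A ⊗ₘ φ.inv.app B) ≫ φ.hom.app (A ⊗ B)
              = 𝟙 ((𝟭 C).obj A ⊗ (𝟭 C).obj B) := by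
            rw [hφt, tensorHom_comp_tensorHom]
            simp [Iso.inv_hom_id_app φ]
          calc φ.inv.app (A ⊗ B)
              = ((φ.inv.app A ⊗ₘ φ.inv.app B) ≫ φ.hom.app (A ⊗ B)) ≫ φ.inv.app (A ⊗ B) := by
                rw [h1]; simp
            _ = (φ.inv.app A ⊗ₘ φ.inv.app B) ≫ (φ.hom.app (A ⊗ B) ≫ φ.inv.app (A ⊗ B)) := by
                rw [Category.assoc]
            _ = φ.inv.app A ⊗ₘ φ.inv.app B := by
                rw [Iso.hom_inv_id_app φ]; simp
        · show φ.inv.app (𝟙_ C) = 𝟙 _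
          have happ : φ.hom.app (𝟙_ C) ≫ φ.inv.app (𝟙_ C) = 𝟙 _ := Iso.hom_inv_id_app φ _
          rw [hφu] at happ
          simpa using happ }
  have hSmem : ∀ φ : Aut (𝟭 C), φ ∈ S ↔ IsTensorAut φ := fun φ => Iff.rfl
  -- scalar multiplicativity along the tensor product, from the grading
  have hc2 : ∀ (χ : Gr →* kˣ) (a b d : ι) (w : s a ⟶ s b ⊗ s d),
      ((χ (gr₀ b) : k) * (χ (gr₀ d) : k)) • w = (χ (gr₀ a) : k) • w := by
    intro χ a b d w
    by_cases hw : w = 0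
    · rw [hw, smul_zero, smul_zero]
    · have := hgr a b d ⟨w, hw⟩
      rw [← Units.val_mul, ← map_mul, this]
  have hmem : ∀ χ : Gr →* kˣ, autOf hss hzero (fun j => χ (gr₀ j)) ∈ S := by
    intro χ
    constructor
    · intro A B
      exact T_tensor hss hzero (fun j => ((χ (gr₀ j) : k))) (hc2 χ) A B
    · refine T_unit hss hzero (fun j => ((χ (gr₀ j) : k))) hunit ?_
      show (χ (gr₀ i₀) : k) = 1
      rw [hGr1, map_one, Units.val_one]
  let Φ₀ : (Gr →* kˣ) →* S :=
    MonoidHom.mk' (fun χ => ⟨autOf hss hzero (fun j => χ (gr₀ j)), hmem χ⟩)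
      (by
        intro χ₁ χ₂
        apply Subtype.ext
        show autOf hss hzero (fun j => (χ₁ * χ₂) (gr₀ j))
          = autOf hss hzero (fun j => χ₁ (gr₀ j)) * autOf hss hzero (fun j => χ₂ (gr₀ j))
        apply Aut.ext
        apply NatTrans.ext
        funext X
        show T hss (fun j => (((χ₁ * χ₂) (gr₀ j) : kˣ) : k)) X
          = T hss (fun j => ((χ₂ (gr₀ j) : kˣ) : k)) X ≫
            T hss (fun j => ((χ₁ (gr₀ j) : kˣ) : k)) X
        rw [T_comp hss hzero]
        congr 1
        funext j
        rw [MonoidHom.mul_apply, Units.val_mul, mul_comm])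
  have hΦ₀coe : ∀ χ : Gr →* kˣ,
      ((Φ₀ χ : S) : Aut (𝟭 C)) = autOf hss hzero (fun j => χ (gr₀ j)) := fun χ => rfl
  -- injectivity
  have hΦinj : Function.Injective Φ₀ := by
    intro χ₁ χ₂ h
    have h' : ∀ j : ι, χ₁ (gr₀ j) = χ₂ (gr₀ j) := by
      intro j
      have h2 := congrArg (fun x : S => (x : Aut (𝟭 C)).hom.app (s j)) h
      simp only [hΦ₀coe, autOf_hom_app] at h2
      rw [T_simple hss hzero, T_simple hss hzero] at h2
      exact Units.ext (hinj j _ _ h2)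
    exact hom_unique (fun i j l => ∃ f : s i ⟶ s j ⊗ s l, f ≠ 0) gr₀ huniv χ₁ χ₂ h'
  -- surjectivity
  have hΦsurj : Function.Surjective Φ₀ := by
    rintro ⟨φ, hφt, hφu⟩
    have hr : ∀ j : ι, ∃ u : kˣ, φ.hom.app (s j) = (u : k) • 𝟙 (s j) := by
      intro j
      obtain ⟨r, hrr⟩ := hscalar j (φ.hom.app (s j))
      obtain ⟨r', hrr'⟩ := hscalar j (φ.inv.app (s j))
      have hcomp : φ.hom.app (s j) ≫ φ.inv.app (s j) = 𝟙 _ := Iso.hom_inv_id_app φ _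
      rw [← hrr, ← hrr'] at hcomp
      have h1 : (r * r') • 𝟙 (s j) = (1 : k) • 𝟙 (s j) := by
        rw [one_smul]
        calc (r * r') • 𝟙 (s j) = (r • 𝟙 (s j)) ≫ (r' • 𝟙 (s j)) := by
              rw [Linear.smul_comp, Linear.comp_smul, Category.comp_id, smul_smul]
          _ = 𝟙 (s j) := hcomp
      have hrr'1 : r * r' = 1 := hinj j _ _ h1
      exact ⟨⟨r, r', hrr'1, by rwa [mul_comm] at hrr'1⟩, hrr.symm⟩
    choose u hu using hr
    have hugrad : ∀ i j l : ι, (∃ f : s i ⟶ s j ⊗ s l, f ≠ 0) → u j * u l = u i := by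
      rintro i j l ⟨f, hf⟩
      have hnat := φ.hom.naturality f
      simp only [Functor.id_obj, Functor.id_map] at hnat
      rw [hφt (s j) (s l), hu j, hu l, hu i, smul_tensor_smul] at hnat
      simp only [Functor.id_obj, id_tensorHom_id, Linear.comp_smul, Linear.smul_comp,
        Category.comp_id, Category.id_comp] at hnat
      apply Units.ext
      rw [Units.val_mul]
      exact hcancel f hf _ _ hnat
    obtain ⟨χ, hχ⟩ := hom_exists (fun i j l => ∃ f : s i ⟶ s j ⊗ s l, f ≠ 0) gr₀ huniv u hugrad
    refine ⟨χ, ?_⟩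
    apply Subtype.ext
    rw [hΦ₀coe]
    apply hdet
    intro j
    rw [autOf_hom_app, T_simple hss hzero, hχ j, hu j]
  let eqv : S ≃* (Gr →* kˣ) := (MulEquiv.ofBijective Φ₀ ⟨hΦinj, hΦsurj⟩).symm
  refine ⟨S, hSmem, eqv, ?_⟩
  intro φ hφ c hc j
  have happ : Φ₀ (eqv ⟨φ, hφ⟩) = ⟨φ, hφ⟩ :=
    (MulEquiv.ofBijective Φ₀ ⟨hΦinj, hΦsurj⟩).apply_symm_apply ⟨φ, hφ⟩
  have h1 : φ.hom.app (s j) = ((eqv ⟨φ, hφ⟩) (gr₀ j) : k) • 𝟙 (s j) := by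
    have h2 := congrArg (fun x : S => (x : Aut (𝟭 C)).hom.app (s j)) happ
    simp only [hΦ₀coe, autOf_hom_app] at h2
    rw [T_simple hss hzero] at h2
    exact h2.symm
  rw [hc j] at h1
  exact (hinj j _ _ h1.symm)

end
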